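/- Let G be a finite simple graph, X ⊆ V(G), and Y ⊆ V(G) \ X. Let Q = {x ∈ Y : deg_{G-X}(x) = 0}, W = {x ∈ Y : deg_{G-X}(x) = 1}, W₁ = {x ∈ W : all neighbors of x in G - X lie in Y}, and W₂ = W \ W₁. Then the subgraph of G - X induced by W₁ has maximum degree at most 1, and G has an independent set of size at least |Q| + |W₁|/2 + |W₂|; consequently the independence number α(G) ≥ |Q| + |W|/2. -/

import Mathlib

/-- The independence number of a graph: the largest size of a set of pairwise
non-adjacent vertices. -/
noncomputable def indepNum {V : Type*} [Fintype V] (G : SimpleGraph V) : ℕ :=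
  sSup {k | ∃ S : Finset V, (∀ u ∈ S, ∀ v ∈ S, ¬ G.Adj u v) ∧ S.card = k}

/-- In a finite graph of max degree ≤ 1, there is an independent set covering
at least half the vertices. -/
lemma matching_indep {V : Type*} [DecidableEq V] (r : V → V → Prop) [DecidableRel r]
    (hsymm : ∀ x y, r x y → r y x) (hirr : ∀ x, ¬ r x x) (A : Finset V)
    (h : ∀ x ∈ A, (A.filter (r x)).card ≤ 1) :
    ∃ T, T ⊆ A ∧ (∀ u ∈ T, ∀ v ∈ T, ¬ r u v) ∧ A.card ≤ 2 * T.card := by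
  induction A using Finset.strongInduction with
  | _ A ih =>
    rcases A.eq_empty_or_nonempty with rfl | ⟨a, ha⟩
    · exact ⟨∅, by simp⟩
    by_cases hb : ∃ b ∈ A, r a b
    · obtain ⟨b, hbA, hab⟩ := hb
      have hba : b ≠ a := fun e => hirr a (e ▸ hab)
      have habA : ({a, b} : Finset V) ⊆ A := by
        intro x hx; simp at hx; rcases hx with rfl | rfl <;> assumption
      have hsub : A \ {a, b} ⊂ A := by
        apply Finset.sdiff_ssubset habA
        simp
      obtain ⟨T, hTA, hTind, hTcard⟩ := ih _ hsub (fun x hx =>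
        le_trans (Finset.card_le_card
          (Finset.filter_subset_filter _ Finset.sdiff_subset))
          (h x (Finset.mem_sdiff.mp hx).1))
      have haT : a ∉ T := by
        intro hmem
        have := Finset.mem_sdiff.mp (hTA hmem)
        simp at this
      have key : ∀ v ∈ T, ¬ r a v := by
        intro v hv hrv
        have hvA' := Finset.mem_sdiff.mp (hTA hv)
        have hvmem : v ∈ A.filter (r a) := Finset.mem_filter.mpr ⟨hvA'.1, hrv⟩
        have hbmem : b ∈ A.filter (r a) := Finset.mem_filter.mpr ⟨hbA, hab⟩
        have hvb : v ≠ b := by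
          have := hvA'.2; simp at this; exact this.2
        have h2 : 1 < (A.filter (r a)).card :=
          Finset.one_lt_card.mpr ⟨v, hvmem, b, hbmem, hvb⟩
        have := h a ha
        omega
      refine ⟨insert a T, ?_, ?_, ?_⟩
      · exact Finset.insert_subset ha (hTA.trans Finset.sdiff_subset)
      · intro u hu v hv
        rcases Finset.mem_insert.mp hu with hua | hu'
        · rcases Finset.mem_insert.mp hv with hva | hv'
          · rw [hua, hva]; exact hirr a
          · rw [hua]; exact key v hv'
        · rcases Finset.mem_insert.mp hv with hva | hv'
          · rw [hva]; exact fun hr => key u hu' (hsymm _ _ hr)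
          · exact hTind u hu' v hv' 
      · have hcard2 : ({a, b} : Finset V).card = 2 := by
          rw [Finset.card_insert_of_notMem (by simpa using hba.symm)]; simp
        have := Finset.card_sdiff_of_subset habA
        have h2le : 2 ≤ A.card := hcard2 ▸ Finset.card_le_card habA
        rw [Finset.card_insert_of_notMem haT]
        omega
    · push_neg at hb
      have hsub : A.erase a ⊂ A := Finset.erase_ssubset ha
      obtain ⟨T, hTA, hTind, hTcard⟩ := ih _ hsub (fun x hx =>
        le_trans (Finset.card_le_card
          (Finset.filter_subset_filter _ (Finset.erase_subset _ _)))
          (h x (Finset.mem_of_mem_erase hx)))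
      have haT : a ∉ T := fun hmem => Finset.notMem_erase a A (hTA hmem)
      refine ⟨insert a T, Finset.insert_subset ha (hTA.trans (Finset.erase_subset _ _)),
        ?_, ?_⟩
      · intro u hu v hv
        rcases Finset.mem_insert.mp hu with hua | hu'
        · rcases Finset.mem_insert.mp hv with hva | hv'
          · rw [hua, hva]; exact hirr a
          · rw [hua]; exact hb v (Finset.mem_of_mem_erase (hTA hv'))
        · rcases Finset.mem_insert.mp hv with hva | hv'
          · rw [hva]; exact fun hr => hb u (Finset.mem_of_mem_erase (hTA hu')) (hsymm _ _ hr)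
          · exact hTind u hu' v hv' 
      · rw [Finset.card_insert_of_notMem haT]
        have := Finset.card_erase_of_mem ha
        have : 1 ≤ A.card := Finset.card_pos.mpr ⟨a, ha⟩
        have := Finset.card_erase_of_mem ha
        omega

theorem stmt2 {V : Type*} [Fintype V] [DecidableEq V] (G : SimpleGraph V)
    [DecidableRel G.Adj] (X Y : Finset V) (hYX : Y ⊆ Xᶜ)
    (Q W W₁ W₂ : Finset V)
    (hQ : Q = Y.filter fun x => (G.neighborFinset x \ X).card = 0)
    (hW : W = Y.filter fun x => (G.neighborFinset x \ X).card = 1)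
    (hW₁ : W₁ = W.filter fun x => G.neighborFinset x \ X ⊆ Y)
    (hW₂ : W₂ = W \ W₁) :
    (∀ x ∈ W₁, ((G.neighborFinset x \ X) ∩ W₁).card ≤ 1) ∧
    (∃ S : Finset V, (∀ u ∈ S, ∀ v ∈ S, ¬ G.Adj u v) ∧
      2 * S.card ≥ 2 * Q.card + W₁.card + 2 * W₂.card) ∧
    2 * indepNum G ≥ 2 * Q.card + W.card := by
  have hnotX : ∀ v ∈ Y, v ∉ X := fun v hv => by simpa using hYX hv
  have hQY : Q ⊆ Y := hQ ▸ Finset.filter_subset _ _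
  have hWY : W ⊆ Y := hW ▸ Finset.filter_subset _ _
  have hW₁W : W₁ ⊆ W := hW₁ ▸ Finset.filter_subset _ _
  have hW₂W : W₂ ⊆ W := hW₂ ▸ Finset.sdiff_subset
  have hdegW : ∀ x ∈ W, (G.neighborFinset x \ X).card = 1 := by
    intro x hx; rw [hW] at hx; exact (Finset.mem_filter.mp hx).2
  -- Part 1
  have part1 : ∀ x ∈ W₁, ((G.neighborFinset x \ X) ∩ W₁).card ≤ 1 := by
    intro x hx
    calc ((G.neighborFinset x \ X) ∩ W₁).card
        ≤ (G.neighborFinset x \ X).card :=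
          Finset.card_le_card (Finset.inter_subset_left)
      _ = 1 := hdegW x (hW₁W hx)
  -- Q-vertices have no neighbors outside X
  have factA : ∀ q ∈ Q, ∀ v, v ∉ X → ¬ G.Adj q v := by
    intro q hq v hv hadj
    have hc : (G.neighborFinset q \ X).card = 0 := by
      rw [hQ] at hq; exact (Finset.mem_filter.mp hq).2
    have : v ∈ G.neighborFinset q \ X :=
      Finset.mem_sdiff.mpr ⟨(SimpleGraph.mem_neighborFinset _ _ _).mpr hadj, hv⟩
    rw [Finset.card_eq_zero.mp hc] at this
    exact absurd this (Finset.notMem_empty v)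
  -- W₂-vertices have no neighbors in Y
  have factB : ∀ w ∈ W₂, ∀ v ∈ Y, ¬ G.Adj w v := by
    intro w hw v hv hadj
    have hwW : w ∈ W := hW₂W hw
    have hns : ¬ (G.neighborFinset w \ X ⊆ Y) := by
      have := (hW₂ ▸ hw : w ∈ W \ W₁)
      have h2 := (Finset.mem_sdiff.mp this).2
      rw [hW₁, Finset.mem_filter] at h2
      exact fun hs => h2 ⟨hwW, hs⟩
    have hvmem : v ∈ G.neighborFinset w \ X :=
      Finset.mem_sdiff.mpr ⟨(SimpleGraph.mem_neighborFinset _ _ _).mpr hadj, hnotX v hv⟩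
    obtain ⟨b, hb⟩ := Finset.card_eq_one.mp (hdegW w hwW)
    rw [hb] at hvmem hns
    have : v = b := Finset.mem_singleton.mp hvmem
    exact hns (by rw [← this]; simpa using hv)
  -- independent set inside W₁
  obtain ⟨T, hTW₁, hTind, hTcard⟩ := matching_indep G.Adj
    (fun x y h => h.symm) (fun x => G.irrefl) W₁
    (fun x hx => by
      calc (W₁.filter (G.Adj x)).card
          ≤ ((G.neighborFinset x \ X) ∩ W₁).card := by
            apply Finset.card_le_card
            intro v hv
            rw [Finset.mem_filter] at hv
            refine Finset.mem_inter.mpr ⟨Finset.mem_sdiff.mpr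
              ⟨(SimpleGraph.mem_neighborFinset _ _ _).mpr hv.2,
               hnotX v (hWY (hW₁W hv.1))⟩, hv.1⟩
        _ ≤ 1 := part1 x hx)
  -- the big independent set
  have hQW : ∀ x, x ∈ Q → x ∉ W := by
    intro x hxQ hxW
    rw [hQ] at hxQ
    have h0 := (Finset.mem_filter.mp hxQ).2
    have h1 := hdegW x hxW
    omega
  set S : Finset V := Q ∪ W₂ ∪ T with hS
  have hSY : S ⊆ Y := by
    intro v hv
    rcases Finset.mem_union.mp hv with hv | hv
    · rcases Finset.mem_union.mp hv with hv | hv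
      · exact hQY hv
      · exact hWY (hW₂W hv)
    · exact hWY (hW₁W (hTW₁ hv))
  have hSind : ∀ u ∈ S, ∀ v ∈ S, ¬ G.Adj u v := by
    intro u hu v hv hadj
    have hcase : ∀ w ∈ S, ∀ z ∈ S, G.Adj w z → w ∈ T → z ∈ T → False := by
      intro w _ z _ h hw hz; exact hTind w hw z hz h
    rcases Finset.mem_union.mp hu with hu' | huT
    · rcases Finset.mem_union.mp hu' with huQ | huW₂
      · exact factA u huQ v (hnotX v (hSY hv)) hadj
      · exact factB u huW₂ v (hSY hv) hadj
    · rcases Finset.mem_union.mp hv with hv' | hvT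
      · rcases Finset.mem_union.mp hv' with hvQ | hvW₂
        · exact factA v hvQ u (hnotX u (hSY hu)) hadj.symm
        · exact factB v hvW₂ u (hSY hu) hadj.symm
      · exact hTind u huT v hvT hadj
  have hdisj1 : Disjoint Q W₂ :=
    Finset.disjoint_left.mpr (fun x hx hx2 => hQW x hx (hW₂W hx2))
  have hdisj2 : Disjoint (Q ∪ W₂) T := by
    apply Finset.disjoint_left.mpr
    intro x hx hxT
    have hxW₁ := hTW₁ hxT
    rcases Finset.mem_union.mp hx with hx | hx
    · exact hQW x hx (hW₁W hxW₁)
    · exact (Finset.mem_sdiff.mp (hW₂ ▸ hx)).2 hxW₁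
  have hScard : S.card = Q.card + W₂.card + T.card := by
    rw [hS, Finset.card_union_of_disjoint hdisj2, Finset.card_union_of_disjoint hdisj1]
  have hWsplit : W.card = W₁.card + W₂.card := by
    rw [hW₂, Finset.card_sdiff_of_subset hW₁W]
    have := Finset.card_le_card hW₁W
    omega
  have part2 : 2 * S.card ≥ 2 * Q.card + W₁.card + 2 * W₂.card := by omega
  refine ⟨part1, ⟨S, hSind, part2⟩, ?_⟩
  -- independence number bound
  have hbdd : BddAbove {k | ∃ S : Finset V, (∀ u ∈ S, ∀ v ∈ S, ¬ G.Adj u v) ∧ S.card = k} := by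
    refine ⟨Fintype.card V, ?_⟩
    rintro k ⟨S', _, rfl⟩
    exact S'.card_le_univ.trans_eq (Finset.card_univ)
  have hmem : S.card ∈ {k | ∃ S : Finset V, (∀ u ∈ S, ∀ v ∈ S, ¬ G.Adj u v) ∧ S.card = k} :=
    ⟨S, hSind, rfl⟩
  have hle : S.card ≤ indepNum G := le_csSup hbdd hmem
  omega
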